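/- Let H ≤ Γ be countable groups, let H act on a countable set Y, and let Γ ↷ X be the induced action. If K ≤ Γ is an infinite subgroup such that gKg⁻¹ ∩ H is finite for every g ∈ Γ, then the restriction K ↷ X has infinite orbits. -/

import Mathlib

/-- `C` is a Følner sequence for the action of `G` on `X` given by `π`. -/
def IsFolnerSeq {G X : Type*} [Group G] (π : G →* Equiv.Perm X) (C : ℕ → Set X) : Prop :=
  (∀ n, (C n).Finite ∧ (C n).Nonempty) ∧
    ∀ g : G, Filter.Tendsto
      (fun n => ((symmDiff (C n) (π g '' C n)).ncard : ℝ) / (C n).ncard)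
      Filter.atTop (nhds 0)

/-- The action of `G` on `X` given by `π` is amenable (admits a Følner sequence). -/
def IsAmenableAction {G X : Type*} [Group G] (π : G →* Equiv.Perm X) : Prop :=
  ∃ C : ℕ → Set X, IsFolnerSeq π C

/-- The action given by `π` has infinite orbits. -/
def HasInfiniteOrbits {G X : Type*} [Group G] (π : G →* Equiv.Perm X) : Prop :=
  ∀ x : X, {y : X | ∃ g : G, π g x = y}.Infinite

/-- The action given by `π` is transitive. -/
def IsTransitiveAction {G X : Type*} [Group G] (π : G →* Equiv.Perm X) : Prop :=
  ∀ x y : X, ∃ g : G, π g x = y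

/-- The action given by `π` is almost free: every non-trivial element has finitely many
fixed points. -/
def IsAlmostFreeAction {G X : Type*} [Group G] (π : G →* Equiv.Perm X) : Prop :=
  ∀ g : G, g ≠ 1 → {x : X | π g x = x}.Finite

/-- The class 𝒜 of countable groups admitting a faithful, transitive and amenable action
on an infinite countable set. -/
def InClassA (G : Type*) [Group G] : Prop :=
  ∃ (X : Type) (_ : Countable X) (_ : Infinite X) (π : G →* Equiv.Perm X),
    Function.Injective π ∧ IsTransitiveAction π ∧ IsAmenableAction π

/-- The class 𝒜_ℱ of countable groups admitting an amenable, almost free action with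
infinite orbits on a countable set. -/
def InClassAF (G : Type*) [Group G] : Prop :=
  ∃ (X : Type) (_ : Countable X) (π : G →* Equiv.Perm X),
    IsAmenableAction π ∧ IsAlmostFreeAction π ∧ HasInfiniteOrbits π
section InducedAction

variable {Γ : Type*} [Group Γ] (H : Subgroup Γ) {Y : Type*} (π : H →* Equiv.Perm Y)

/-- The equivalence relation on `Y × Γ` given by the diagonal `H`-action
`h • (y, g) = (h • y, h * g)`. -/
def indSetoid : Setoid (Y × Γ) where
  r p q := ∃ h : H, π h p.1 = q.1 ∧ (h : Γ) * p.2 = q.2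
  iseqv := by
    constructor
    · intro p
      exact ⟨1, by simp, by simp⟩
    · rintro p q ⟨h, h1, h2⟩
      refine ⟨h⁻¹, ?_, ?_⟩
      · rw [← h1]; simp
      · rw [← h2]; simp [mul_assoc]
    · rintro p q r ⟨h, h1, h2⟩ ⟨k, k1, k2⟩
      refine ⟨k * h, ?_, ?_⟩
      · rw [← k1, ← h1]; simp
      · rw [← k2, ← h2]; simp [mul_assoc]

/-- The underlying set `X = H \ (Y × Γ)` of the induced action. -/
def IndSpace : Type _ := Quotient (indSetoid H π)

/-- The induced action of `Γ` on `X = H \ (Y × Γ)`, given by `γ • [y, g] = [y, g * γ⁻¹]`. -/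
def indHom : Γ →* Equiv.Perm (IndSpace H π) where
  toFun γ :=
    { toFun := Quotient.map' (fun p => (p.1, p.2 * γ⁻¹))
        (by rintro p q ⟨h, h1, h2⟩; exact ⟨h, h1, by show (h : Γ) * (p.2 * _) = q.2 * _; rw [← h2, mul_assoc]⟩)
      invFun := Quotient.map' (fun p => (p.1, p.2 * γ))
        (by rintro p q ⟨h, h1, h2⟩; exact ⟨h, h1, by show (h : Γ) * (p.2 * _) = q.2 * _; rw [← h2, mul_assoc]⟩)
      left_inv := by
        intro x
        induction x using Quotient.inductionOn' with
        | h p => simp [Quotient.map'_mk'', mul_assoc]; rfl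
      right_inv := by
        intro x
        induction x using Quotient.inductionOn' with
        | h p => simp [Quotient.map'_mk'', mul_assoc]; rfl }
  map_one' := by
    apply Equiv.ext
    intro x
    induction x using Quotient.inductionOn' with
    | h p => show Quotient.mk'' (p.1, p.2 * 1⁻¹) = Quotient.mk'' p; simp
  map_mul' γ₁ γ₂ := by
    apply Equiv.ext
    intro x
    induction x using Quotient.inductionOn' with
    | h p =>
      show Quotient.mk'' (p.1, p.2 * (γ₁ * γ₂)⁻¹) = Quotient.mk'' ((p.1, p.2 * γ₂⁻¹).1, (p.1, p.2 * γ₂⁻¹).2 * γ₁⁻¹)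
      simp [mul_assoc]

end InducedAction

/-- **Lemma 2.5 (4).**  Let `H ≤ Γ` be countable groups, `H ↷ Y` an action on a countable
set and `Γ ↷ X` the induced action.  If `K ≤ Γ` is an infinite subgroup such that
`gKg⁻¹ ∩ H` is finite for every `g ∈ Γ`, then the restriction `K ↷ X` has infinite
orbits. -/
theorem induced_action_infinite_orbits_of_finite_intersections
    {Γ Y : Type*} [Group Γ] [Countable Γ] [Countable Y]
    (H : Subgroup Γ) (π : H →* Equiv.Perm Y)
    (K : Subgroup Γ) [Infinite K]
    (hK : ∀ g : Γ, {x : Γ | x ∈ H ∧ g⁻¹ * x * g ∈ K}.Finite) :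
    HasInfiniteOrbits ((indHom H π).comp K.subtype) := by
  intro x
  induction x using Quotient.inductionOn' with
  | h p =>
    obtain ⟨y, g⟩ := p
    set f : K → IndSpace H π :=
      fun k => ((indHom H π).comp K.subtype) k (Quotient.mk'' (y, g)) with hf
    have hfval : ∀ k : K, f k = Quotient.mk'' (y, g * (k : Γ)⁻¹) := fun k => rfl
    by_contra hfin
    rw [Set.not_infinite] at hfin
    have hfiber : ∀ k₀ : K, ({k : K | f k = f k₀} : Set K).Finite := by
      intro k₀
      have hinj : Set.InjOn (fun k : K => g * ((k₀ : Γ)⁻¹ * (k : Γ)) * g⁻¹)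
          {k : K | f k = f k₀} := by
        intro a _ b _ hab
        have hab' : g * ((k₀ : Γ)⁻¹ * (a : Γ)) * g⁻¹ = g * ((k₀ : Γ)⁻¹ * (b : Γ)) * g⁻¹ := hab
        have : ((a : Γ)) = b :=
          mul_left_cancel (mul_left_cancel (mul_right_cancel hab'))
        exact Subtype.ext this
      apply Set.Finite.of_finite_image _ hinj
      apply (hK g).subset
      rintro _ ⟨k, hk, rfl⟩
      have hk' : Quotient.mk'' (y, g * (k : Γ)⁻¹) =
          (Quotient.mk'' (y, g * (k₀ : Γ)⁻¹) : IndSpace H π) := by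
        rw [← hfval, ← hfval]; exact hk
      obtain ⟨h, h1, h2⟩ := Quotient.exact' hk'
      have hh : (h : Γ) = g * ((k₀ : Γ)⁻¹ * (k : Γ)) * g⁻¹ := by
        have h2' : (h : Γ) * (g * (k : Γ)⁻¹) = g * (k₀ : Γ)⁻¹ := h2
        have := eq_mul_inv_of_mul_eq h2'
        rw [this]; group
      refine ⟨?_, ?_⟩
      · show g * ((k₀ : Γ)⁻¹ * (k : Γ)) * g⁻¹ ∈ H
        rw [← hh]; exact h.2
      · show g⁻¹ * (g * ((k₀ : Γ)⁻¹ * (k : Γ)) * g⁻¹) * g ∈ K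
        have : g⁻¹ * (g * ((k₀ : Γ)⁻¹ * (k : Γ)) * g⁻¹) * g = (k₀ : Γ)⁻¹ * k := by
          group
        rw [this]
        exact mul_mem (inv_mem k₀.2) k.2
    have hrange : (Set.range f).Finite := hfin.subset (by rintro _ ⟨k, rfl⟩; exact ⟨k, rfl⟩)
    have huniv : (Set.univ : Set K).Finite := by
      have : (Set.univ : Set K) ⊆ ⋃ s ∈ Set.range f, f ⁻¹' {s} := by
        intro k _
        exact Set.mem_biUnion ⟨k, rfl⟩ rfl
      refine Set.Finite.subset (hrange.biUnion ?_) this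
      rintro _ ⟨k₀, rfl⟩
      exact hfiber k₀
    exact Set.infinite_univ huniv
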